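/- arXiv:2602.16141 — 3 statements merged into one kernel-verified Lean document; each statement's English description precedes it below -/
import Mathlib

section
/- Let Γ be a finite simple graph on V = {1,…,n}. Writing ad_X(B) = [X,B] and ad_X^3(B) = [X,[X,[X,B]]], one has ad_X^3(Z) + 16·ad_X(Z) = 0 in End(W). -/
open scoped Classical

attribute [local instance] LieRing.ofAssociativeRing

noncomputable section

/-- The Hilbert space with basis indexed by bit strings on `S`. -/
abbrev QState (S : Type*) : Type _ := (S → Bool) → ℂ

section Pauli

variable {S : Type*} [Fintype S] [DecidableEq S]

/-- Pauli `Z` operator at site `w`: `Z_w |b⟩ = (-1)^{b_w} |b⟩`. -/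
def pauliZ (w : S) : Module.End ℂ (QState S) where
  toFun g b := (if b w then (-1 : ℂ) else 1) * g b
  map_add' g h := by funext b; simp only [Pi.add_apply]; ring
  map_smul' c g := by
    funext b
    simp only [Pi.smul_apply, smul_eq_mul, RingHom.id_apply]
    ring

/-- Pauli `X` operator at site `w`: `X_w |b⟩ = |b ⊕ e_w⟩`. -/
def pauliX (w : S) : Module.End ℂ (QState S) where
  toFun g b := g (Function.update b w (!(b w)))
  map_add' g h := rfl
  map_smul' c g := rfl

/-- Pauli `Y` operator at site `w`: `Y_w = i · X_w · Z_w`. -/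
def pauliY (w : S) : Module.End ℂ (QState S) := Complex.I • (pauliX w * pauliZ w)

lemma pauliZ_mul_comm (a b : S) : pauliZ a * pauliZ b = pauliZ b * pauliZ a := by
  apply LinearMap.ext
  intro g
  funext x
  show (if x a then (-1 : ℂ) else 1) * ((if x b then (-1 : ℂ) else 1) * g x)
      = (if x b then (-1 : ℂ) else 1) * ((if x a then (-1 : ℂ) else 1) * g x)
  ring

/-- The operator `Z_w Z_{w'}` attached to an unordered pair `e = {w, w'}`. -/
def pauliZZ (e : Sym2 S) : Module.End ℂ (QState S) :=
  Sym2.lift ⟨fun a b => pauliZ a * pauliZ b, pauliZ_mul_comm⟩ e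

/-- The computational basis vector `|b⟩`. -/
def ket (b : S → Bool) : QState S := fun b' => if b' = b then 1 else 0

end Pauli

section Full

variable {V : Type*} [Fintype V] [DecidableEq V]

/-- `X := i ∑_w X_w`, the (rescaled) standard mixer Hamiltonian. -/
def Xop (V : Type*) [Fintype V] [DecidableEq V] : Module.End ℂ (QState V) :=
  Complex.I • ∑ w : V, pauliX w

/-- `Z := i ∑_{(w,w') ∈ E} Z_w Z_{w'}`, the (rescaled) MaxCut problem Hamiltonian. -/
def Zop (Γ : SimpleGraph V) : Module.End ℂ (QState V) :=
  Complex.I • ∑ e ∈ Γ.edgeFinset, pauliZZ e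

/-- The standard dynamical Lie algebra `g_{Γ,std}`. -/
def gstd (Γ : SimpleGraph V) : LieSubalgebra ℝ (Module.End ℂ (QState V)) :=
  LieSubalgebra.lieSpan ℝ _ {Xop V, Zop Γ}

/-- The free dynamical Lie algebra `g_{Γ,free}`. -/
def gfree (Γ : SimpleGraph V) : LieSubalgebra ℝ (Module.End ℂ (QState V)) :=
  LieSubalgebra.lieSpan ℝ _
    ((Set.range fun w : V => Complex.I • (pauliX w : Module.End ℂ (QState V))) ∪
     {A | ∃ a b : V, Γ.Adj a b ∧ A = Complex.I • (pauliZ a * pauliZ b)})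

end Full

section Reduced

variable {V : Type*} [Fintype V] [DecidableEq V]

/-- Pauli `X` at vertex `a` acting on the reduced space at `v` (zero if `a = v`). -/
def pauliXsub (v a : V) : Module.End ℂ (QState {w : V // w ≠ v}) :=
  if h : a = v then 0 else pauliX (⟨a, h⟩ : {w : V // w ≠ v})

/-- Pauli `Z` at vertex `a` acting on the reduced space at `v` (zero if `a = v`). -/
def pauliZsub (v a : V) : Module.End ℂ (QState {w : V // w ≠ v}) :=
  if h : a = v then 0 else pauliZ (⟨a, h⟩ : {w : V // w ≠ v})

lemma pauliZsub_mul_comm (v : V) (a b : V) :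
    pauliZsub v a * pauliZsub v b = pauliZsub v b * pauliZsub v a := by
  unfold pauliZsub
  split_ifs <;> simp [pauliZ_mul_comm]

/-- The operator `Z_w Z_{w'}` on the reduced space at `v`, for an unordered pair. -/
def pauliZZsub (v : V) (e : Sym2 V) : Module.End ℂ (QState {w : V // w ≠ v}) :=
  Sym2.lift ⟨fun a b => pauliZsub v a * pauliZsub v b, pauliZsub_mul_comm v⟩ e

/-- `𝒳 := i ∑_{w ≠ v} X_w`, the reduced mixer. -/
def Xred (v : V) : Module.End ℂ (QState {w : V // w ≠ v}) :=
  Complex.I • ∑ w : {w : V // w ≠ v}, pauliX w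

/-- `𝒵 := i ∑_{(w,w')∈E, w,w'≠v} Z_w Z_{w'} + i ∑_{(v,w)∈E} Z_w`, the reduced problem operator. -/
def Zred (Γ : SimpleGraph V) (v : V) : Module.End ℂ (QState {w : V // w ≠ v}) :=
  Complex.I • ∑ e ∈ Γ.edgeFinset.filter (fun e => v ∉ e), pauliZZsub v e
    + Complex.I • ∑ w ∈ Γ.neighborFinset v, pauliZsub v w

/-- The standard reduced dynamical Lie algebra `g^v_{Γ,std}`. -/
def gstdRed (Γ : SimpleGraph V) (v : V) :
    LieSubalgebra ℝ (Module.End ℂ (QState {w : V // w ≠ v})) :=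
  LieSubalgebra.lieSpan ℝ _ {Xred v, Zred Γ v}

/-- The free reduced dynamical Lie algebra `g^v_{Γ,free}`. -/
def gfreeRed (Γ : SimpleGraph V) (v : V) :
    LieSubalgebra ℝ (Module.End ℂ (QState {w : V // w ≠ v})) :=
  LieSubalgebra.lieSpan ℝ _
    ((Set.range fun w : {w : V // w ≠ v} =>
        Complex.I • (pauliX w : Module.End ℂ (QState {w : V // w ≠ v}))) ∪
     {A | ∃ a b : V, Γ.Adj a b ∧ a ≠ v ∧ b ≠ v ∧
        A = Complex.I • (pauliZsub v a * pauliZsub v b)} ∪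
     {A | ∃ a : V, Γ.Adj v a ∧ A = Complex.I • pauliZsub v a})

/-- The free dynamical Lie algebra `g_{Γ_v,free}` of the reduced graph (no single-site `Z`'s). -/
def gfreeRedGraph (Γ : SimpleGraph V) (v : V) :
    LieSubalgebra ℝ (Module.End ℂ (QState {w : V // w ≠ v})) :=
  LieSubalgebra.lieSpan ℝ _
    ((Set.range fun w : {w : V // w ≠ v} =>
        Complex.I • (pauliX w : Module.End ℂ (QState {w : V // w ≠ v}))) ∪
     {A | ∃ a b : V, Γ.Adj a b ∧ a ≠ v ∧ b ≠ v ∧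
        A = Complex.I • (pauliZsub v a * pauliZsub v b)})

end Reduced
section Misc

variable {V : Type*} [Fintype V] [DecidableEq V]

/-- The value of the cut determined by the assignment `x : V → Bool`. -/
def cutValue (Γ : SimpleGraph V) (x : V → Bool) : ℕ :=
  (Γ.edgeFinset.filter (fun e => ∃ a ∈ e, ∃ b ∈ e, x a ≠ x b)).card

/-- A graph is bipartite if its vertices can be split into two parts with
every edge joining the two parts. -/
def IsBipartiteGraph {W : Type*} (Γ : SimpleGraph W) : Prop :=
  ∃ f : W → Bool, ∀ a b, Γ.Adj a b → f a ≠ f b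

/-- The reduced graph `Γ_v`: the graph induced on `V ∖ {v}`. -/
def reducedGraph {W : Type*} (Γ : SimpleGraph W) (v : W) : SimpleGraph {w : W // w ≠ v} where
  Adj a b := Γ.Adj a.1 b.1
  symm := ⟨fun _ _ h => Γ.symm.symm _ _ h⟩
  loopless := ⟨fun a h => Γ.loopless.irrefl a.1 h⟩

/-- Skew-adjointness (`A* = -A`) with respect to the Hermitian inner product making the
computational basis orthonormal, expressed through matrix entries. -/
def IsSkewAdjointOp {S : Type*} [Fintype S] [DecidableEq S]
    (A : Module.End ℂ (QState S)) : Prop :=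
  ∀ b b' : S → Bool, (starRingEnd ℂ) (A (ket b) b') = - A (ket b') b

/-- The Hadamard-product vector `|h⟩ = ∑_b (∏_{w : h_w = -} (-1)^{b_w}) |b⟩`, where the sign
pattern `h : S → Bool` records a `-` as `true`. -/
def hadamardVec {S : Type*} [Fintype S] [DecidableEq S] (h : S → Bool) : QState S :=
  fun b => ∏ w ∈ Finset.univ.filter (fun w => h w), (if b w then (-1 : ℂ) else 1)

/-- The balance of a bit string on the indices `ι 0, …, ι (m-1)`: the number of `0`'s minus the
number of `1`'s among those positions. -/
def balance {S : Type*} [Fintype S] {m : ℕ} (ι : Fin m → S) (b : S → Bool) : ℤ :=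
  ((Finset.univ.filter (fun j : Fin m => b (ι j) = false)).card : ℤ)
    - ((Finset.univ.filter (fun j : Fin m => b (ι j) = true)).card : ℤ)

/-- `C^v_{j,a}`: vertices at distance `j` from `v` reachable from `v` by a path (walk of length
`j`, necessarily a shortest path) whose intermediate degree parities follow `a`. -/
def Cset (Γ : SimpleGraph V) (v : V) (j : ℕ) (a : Fin j → ZMod 2) : Set V :=
  {w | Γ.dist v w = j ∧
    ∃ p : Γ.Walk v w, p.length = j ∧
      ∀ s : Fin j, (Γ.degree (p.getVert (s.1 + 1)) : ZMod 2) = a s}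

/-- `C^v_{j,ℓ,a}`: vertices `w` at distance `j` from `v` admitting a (distance-increasing) path of
length `ℓ` to some `w'` at distance `j + ℓ`, with degree parities along it following `a`. -/
def Cset2 (Γ : SimpleGraph V) (v : V) (j ℓ : ℕ) (a : Fin ℓ → ZMod 2) : Set V :=
  {w | Γ.dist v w = j ∧
    ∃ w' : V, Γ.dist v w' = j + ℓ ∧
      ∃ p : Γ.Walk w w', p.length = ℓ ∧
        ∀ s : Fin ℓ, (Γ.degree (p.getVert (s.1 + 1)) : ZMod 2) = a s}

end Misc

/-- The `k`-armed spider graph `O_{m_1,…,m_k}`: a central vertex `none`, with `k` paths attached;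
`some ⟨j, s⟩` is the `(s+1)`-st vertex `u_{j,s+1}` of the `j`-th arm. -/
def spider (k : ℕ) (m : Fin k → ℕ) : SimpleGraph (Option (Σ j : Fin k, Fin (m j))) :=
  SimpleGraph.fromRel (fun x y =>
    (∃ (j : Fin k) (s : Fin (m j)), s.1 = 0 ∧ x = none ∧ y = some ⟨j, s⟩) ∨
    (∃ (j : Fin k) (s t : Fin (m j)), t.1 = s.1 + 1 ∧ x = some ⟨j, s⟩ ∧ y = some ⟨j, t⟩))

noncomputable section

section abstractring
variable {R : Type*} [Ring R] (x y d : R)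

lemma rc1 (hdx : d*x = -(x*d)) : ⁅x, d⁆ = x*d + x*d := by
  rw [Ring.lie_def, hdx, sub_neg_eq_add]

lemma rc2 (hdx : d*x = -(x*d)) (hx2 : x*x = 1) : ⁅x, x*d⁆ = d + d := by
  rw [Ring.lie_def]
  have h : (x*d)*x = -d := by
    rw [mul_assoc, hdx, mul_neg, ← mul_assoc, hx2, one_mul]
  rw [h, ← mul_assoc, hx2, one_mul, sub_neg_eq_add]

lemma rc3 (hdy : d*y = -(y*d)) (hxy : x*y = y*x) : ⁅y, x*d⁆ = x*(y*d) + x*(y*d) := by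
  rw [Ring.lie_def]
  have h1 : y*(x*d) = x*(y*d) := by rw [← mul_assoc, ← hxy, mul_assoc]
  have h2 : (x*d)*y = -(x*(y*d)) := by rw [mul_assoc, hdy, mul_neg]
  rw [h1, h2, sub_neg_eq_add]

lemma rc3' (hdx : d*x = -(x*d)) (hxy : x*y = y*x) : ⁅x, y*d⁆ = x*(y*d) + x*(y*d) := by
  rw [Ring.lie_def]
  have h2 : (y*d)*x = -(x*(y*d)) := by
    rw [mul_assoc, hdx, mul_neg, ← mul_assoc, ← hxy, mul_assoc]
  rw [h2, sub_neg_eq_add]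

lemma rc4 (hdx : d*x = -(x*d)) (hxy : x*y = y*x) (hx2 : x*x = 1) :
    ⁅x, x*(y*d)⁆ = y*d + y*d := by
  rw [Ring.lie_def]
  have h1 : x*(x*(y*d)) = y*d := by rw [← mul_assoc, hx2, one_mul]
  have h2 : (x*(y*d))*x = -(y*d) := by
    rw [mul_assoc, mul_assoc, hdx, mul_neg, mul_neg, ← mul_assoc y x d, ← hxy,
      mul_assoc x y d, ← mul_assoc, ← mul_assoc, hx2, one_mul]
  rw [h1, h2, sub_neg_eq_add]

lemma rc4' (hdy : d*y = -(y*d)) (hxy : x*y = y*x) (hy2 : y*y = 1) :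
    ⁅y, x*(y*d)⁆ = x*d + x*d := by
  rw [Ring.lie_def]
  have h1 : y*(x*(y*d)) = x*d := by
    rw [← mul_assoc, ← hxy, mul_assoc, ← mul_assoc y y d, hy2, one_mul]
  have h2 : (x*(y*d))*y = -(x*d) := by
    rw [mul_assoc, mul_assoc, hdy, mul_neg, mul_neg, ← mul_assoc y y d, hy2, one_mul]
  rw [h1, h2, sub_neg_eq_add]

lemma my_lie_sum {ι : Type*} (s : Finset ι) (f : ι → R) :
    ⁅x, ∑ i ∈ s, f i⁆ = ∑ i ∈ s, ⁅x, f i⁆ := by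
  simp [Ring.lie_def, Finset.mul_sum, Finset.sum_mul, Finset.sum_sub_distrib]

lemma my_sum_lie {ι : Type*} (s : Finset ι) (f : ι → R) :
    ⁅∑ i ∈ s, f i, x⁆ = ∑ i ∈ s, ⁅f i, x⁆ := by
  simp [Ring.lie_def, Finset.mul_sum, Finset.sum_mul, Finset.sum_sub_distrib]

lemma my_commute_lie (z : R) (h : Commute x z) : ⁅x, z⁆ = 0 := by
  rw [Ring.lie_def, sub_eq_zero]; exact h

end abstractring

lemma rneg1 {R : Type*} [Ring R] (a b c : R) : -(a*b)*c = -(a*(b*c)) := by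
  rw [neg_mul, mul_assoc]

lemma rneg2 {R : Type*} [Ring R] (a b c : R) : a * -(b*c) = -((a*b)*c) := by
  rw [mul_neg, mul_assoc]

section auxproofs

variable {S : Type*} [Fintype S] [DecidableEq S]

lemma pauliXX (w v : S) : pauliX w * pauliX v = pauliX v * pauliX w := by
  by_cases h : w = v
  · subst h; rfl
  · apply LinearMap.ext; intro g; funext b
    show g _ = g _
    congr 1
    rw [Function.update_of_ne h, Function.update_of_ne (Ne.symm h)]
    exact Function.update_comm h _ _ b

lemma pauliXZ (w v : S) (h : w ≠ v) : pauliX w * pauliZ v = pauliZ v * pauliX w := by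
  apply LinearMap.ext; intro g; funext b
  show (if Function.update b w (!(b w)) v then (-1:ℂ) else 1) * g _
      = (if b v then (-1:ℂ) else 1) * g _
  rw [Function.update_of_ne (Ne.symm h)]

lemma pauliXZself (w : S) : pauliX w * pauliZ w = -(pauliZ w * pauliX w) := by
  apply LinearMap.ext; intro g; funext b
  show (if Function.update b w (!(b w)) w then (-1:ℂ) else 1) * g _
      = -((if b w then (-1:ℂ) else 1) * g _)
  rw [Function.update_self]
  cases h : b w <;> simp

lemma pauliXsq (w : S) : pauliX w * pauliX w = 1 := by
  apply LinearMap.ext; intro g; funext b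
  show g _ = g b
  congr 1
  rw [Function.update_idem, Function.update_self, Bool.not_not, Function.update_eq_self]

lemma pauliZXself (w : S) : pauliZ w * pauliX w = -(pauliX w * pauliZ w) := by
  rw [pauliXZself, neg_neg]

lemma commXZ (w v : S) (h : w ≠ v) : Commute (pauliX w) (pauliZ (S := S) v) := pauliXZ w v h

lemma commXX (w v : S) : Commute (pauliX (S := S) w) (pauliX v) := pauliXX w v

lemma sum_lie_two (a b : S) (hab : a ≠ b) (M : Module.End ℂ (QState S))
    (hM : ∀ w, w ≠ a → w ≠ b → Commute (pauliX w) M) :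
    ⁅∑ w : S, pauliX w, M⁆ = ⁅pauliX a, M⁆ + ⁅pauliX b, M⁆ := by
  rw [my_sum_lie]
  rw [← Finset.sum_subset (Finset.subset_univ ({a, b} : Finset S))
    (fun w _ hw => by
      simp only [Finset.mem_insert, Finset.mem_singleton, not_or] at hw
      exact my_commute_lie _ _ (hM w hw.1 hw.2))]
  rw [Finset.sum_pair hab]

lemma edge_key (a b : S) (hab : a ≠ b) :
    ⁅∑ w : S, pauliX w, ⁅∑ w : S, pauliX w, ⁅∑ w : S, pauliX w,
      pauliZ a * pauliZ b⁆⁆⁆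
    = (16 : ℂ) • ⁅∑ w : S, pauliX w, pauliZ a * pauliZ b⁆ := by
  have hdx : (pauliZ a * pauliZ b) * pauliX a = -(pauliX a * (pauliZ a * pauliZ b)) := by
    calc (pauliZ a * pauliZ b) * pauliX a
        = pauliZ a * (pauliZ b * pauliX a) := mul_assoc _ _ _
      _ = pauliZ a * (pauliX a * pauliZ b) := by rw [← pauliXZ a b hab]
      _ = (pauliZ a * pauliX a) * pauliZ b := (mul_assoc _ _ _).symm
      _ = (-(pauliX a * pauliZ a)) * pauliZ b := by rw [pauliZXself a]
      _ = -(pauliX a * (pauliZ a * pauliZ b)) := rneg1 _ _ _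
  have hdy : (pauliZ a * pauliZ b) * pauliX b = -(pauliX b * (pauliZ a * pauliZ b)) := by
    calc (pauliZ a * pauliZ b) * pauliX b
        = pauliZ a * (pauliZ b * pauliX b) := mul_assoc _ _ _
      _ = pauliZ a * (-(pauliX b * pauliZ b)) := by rw [pauliZXself b]
      _ = -((pauliZ a * pauliX b) * pauliZ b) := rneg2 _ _ _
      _ = -((pauliX b * pauliZ a) * pauliZ b) := by rw [← pauliXZ b a (Ne.symm hab)]
      _ = -(pauliX b * (pauliZ a * pauliZ b)) := congrArg Neg.neg (mul_assoc _ _ _)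
  have hxy : pauliX a * pauliX b = pauliX b * pauliX a := pauliXX a b
  have hx2 : pauliX a * pauliX a = 1 := pauliXsq a
  have hy2 : pauliX b * pauliX b = 1 := pauliXsq b
  have hcd : ∀ w, w ≠ a → w ≠ b → Commute (pauliX w) (pauliZ a * pauliZ b) :=
    fun w ha hb => (commXZ w a ha).mul_right (commXZ w b hb)
  have hcxd : ∀ w, w ≠ a → w ≠ b → Commute (pauliX w) (pauliX a * (pauliZ a * pauliZ b)) :=
    fun w ha hb => (commXX w a).mul_right (hcd w ha hb)
  have hcyd : ∀ w, w ≠ a → w ≠ b → Commute (pauliX w) (pauliX b * (pauliZ a * pauliZ b)) :=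
    fun w ha hb => (commXX w b).mul_right (hcd w ha hb)
  have hcxyd : ∀ w, w ≠ a → w ≠ b →
      Commute (pauliX w) (pauliX a * (pauliX b * (pauliZ a * pauliZ b))) :=
    fun w ha hb => (commXX w a).mul_right (hcyd w ha hb)
  have h1 : ⁅∑ w : S, pauliX w, pauliZ a * pauliZ b⁆
      = (pauliX a * (pauliZ a * pauliZ b) + pauliX a * (pauliZ a * pauliZ b))
        + (pauliX b * (pauliZ a * pauliZ b) + pauliX b * (pauliZ a * pauliZ b)) := by
    rw [sum_lie_two a b hab _ hcd, rc1 _ _ hdx, rc1 _ _ hdy]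
  have h2 : ⁅∑ w : S, pauliX w, pauliX a * (pauliZ a * pauliZ b)⁆
      = ((pauliZ a * pauliZ b) + (pauliZ a * pauliZ b))
        + (pauliX a * (pauliX b * (pauliZ a * pauliZ b))
          + pauliX a * (pauliX b * (pauliZ a * pauliZ b))) := by
    rw [sum_lie_two a b hab _ hcxd, rc2 _ _ hdx hx2, rc3 _ _ _ hdy hxy]
  have h3 : ⁅∑ w : S, pauliX w, pauliX b * (pauliZ a * pauliZ b)⁆
      = (pauliX a * (pauliX b * (pauliZ a * pauliZ b))
          + pauliX a * (pauliX b * (pauliZ a * pauliZ b)))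
        + ((pauliZ a * pauliZ b) + (pauliZ a * pauliZ b)) := by
    rw [sum_lie_two a b hab _ hcyd, rc3' _ _ _ hdx hxy, rc2 _ _ hdy hy2]
  have h4 : ⁅∑ w : S, pauliX w, pauliX a * (pauliX b * (pauliZ a * pauliZ b))⁆
      = (pauliX b * (pauliZ a * pauliZ b) + pauliX b * (pauliZ a * pauliZ b))
        + (pauliX a * (pauliZ a * pauliZ b) + pauliX a * (pauliZ a * pauliZ b)) := by
    rw [sum_lie_two a b hab _ hcxyd, rc4 _ _ _ hdx hxy hx2, rc4' _ _ _ hdy hxy hy2]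
  rw [h1]
  simp only [lie_add, h1, h2, h3, h4]
  module

lemma my_smul_lie (c : ℂ) (A B : Module.End ℂ (QState S)) : ⁅c • A, B⁆ = c • ⁅A, B⁆ := by
  simp [Ring.lie_def, smul_sub, smul_mul_assoc, mul_smul_comm]

lemma my_lie_smul (c : ℂ) (A B : Module.End ℂ (QState S)) : ⁅A, c • B⁆ = c • ⁅A, B⁆ := by
  simp [Ring.lie_def, smul_sub, smul_mul_assoc, mul_smul_comm]

end auxproofs

theorem stmt1' {V : Type*} [Fintype V] [DecidableEq V] (Γ : SimpleGraph V) :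
    ⁅Xop V, ⁅Xop V, ⁅Xop V, Zop Γ⁆⁆⁆ + (16 : ℂ) • ⁅Xop V, Zop Γ⁆ = 0 := by
  have key : ⁅∑ w : V, pauliX w, ⁅∑ w : V, pauliX w, ⁅∑ w : V, pauliX w,
      ∑ e ∈ Γ.edgeFinset, pauliZZ e⁆⁆⁆
      = (16 : ℂ) • ⁅∑ w : V, pauliX w, ∑ e ∈ Γ.edgeFinset, pauliZZ e⁆ := by
    simp only [my_lie_sum, Finset.smul_sum]
    refine Finset.sum_congr rfl (fun e he => ?_)
    induction e using Sym2.ind with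
    | _ a b =>
      rw [SimpleGraph.mem_edgeFinset, SimpleGraph.mem_edgeSet] at he
      have hZZ : pauliZZ (s(a, b)) = pauliZ a * pauliZ b := Sym2.lift_mk _ a b
      rw [hZZ, edge_key a b he.ne]
  simp only [Xop, Zop, my_smul_lie, my_lie_smul, key, smul_smul]
  match_scalars
  simp [Complex.I_mul_I]
  ring_nf
  simp [Complex.I_sq]

/-- `ad_X^3(Z) + 16 · ad_X(Z) = 0`. -/
theorem stmt1 (n : ℕ) (hn : 1 ≤ n) (Γ : SimpleGraph (Fin n)) :
    ⁅Xop (Fin n), ⁅Xop (Fin n), ⁅Xop (Fin n), Zop Γ⁆⁆⁆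
      + (16 : ℂ) • ⁅Xop (Fin n), Zop Γ⁆ = 0 := stmt1' Γ
end
end
end

section
/- Let Γ be a connected finite simple graph on V = {1,…,n}. Then: (1) W = W_even ⊕ W_odd; (2) dim_ℂ W_even = dim_ℂ W_odd = 2^{n−1}; (3) both W_even and W_odd are invariant under every element of g_{Γ,free}; (4) each is an irreducible representation: every complex subspace U ⊆ W_even (respectively U ⊆ W_odd) satisfying A(U) ⊆ U for all A ∈ g_{Γ,free} equals {0} or the whole of W_even (respectively W_odd). -/
open scoped Classical

noncomputable section

attribute [local instance 100] LieRing.ofAssociativeRing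

/-- `W_even`: the span of the Hadamard vectors with an even number of `-` factors. -/
def Weven (n : ℕ) : Submodule ℂ (QState (Fin n)) :=
  Submodule.span ℂ {g | ∃ h : Fin n → Bool,
    Even (Finset.univ.filter (fun w => h w)).card ∧ g = hadamardVec h}

/-- `W_odd`: the span of the Hadamard vectors with an odd number of `-` factors. -/
def Wodd (n : ℕ) : Submodule ℂ (QState (Fin n)) :=
  Submodule.span ℂ {g | ∃ h : Fin n → Bool,
    Odd (Finset.univ.filter (fun w => h w)).card ∧ g = hadamardVec h}


section AuxHadamard

variable {S : Type*} [Fintype S] [DecidableEq S]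

/-- Hamming weight of a sign pattern. -/
def wtN (h : S → Bool) : ℕ := (Finset.univ.filter (fun w => h w)).card

/-- Pointwise xor. -/
def hxor (a b : S → Bool) : S → Bool := fun w => xor (a w) (b w)

/-- Indicator pattern of a single site. -/
def sing (x : S) : S → Bool := fun w => decide (w = x)

lemma pauliX_apply (w : S) (g : QState S) (b : S → Bool) :
    pauliX w g b = g (Function.update b w (!(b w))) := rfl

lemma pauliZ_apply (w : S) (g : QState S) (b : S → Bool) :
    pauliZ w g b = (if b w then (-1:ℂ) else 1) * g b := rfl

lemma hadamardVec_eq (h b : S → Bool) :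
    hadamardVec h b = ∏ w, (if h w && b w then (-1:ℂ) else 1) := by
  unfold hadamardVec
  rw [Finset.prod_filter]
  refine Finset.prod_congr rfl fun w _ => ?_
  cases hw : h w <;> cases hb : b w <;> simp

lemma hadamardVec_mul (h h' b : S → Bool) :
    hadamardVec h b * hadamardVec h' b = hadamardVec (hxor h h') b := by
  rw [hadamardVec_eq, hadamardVec_eq, hadamardVec_eq, ← Finset.prod_mul_distrib]
  refine Finset.prod_congr rfl fun w _ => ?_
  unfold hxor
  cases h w <;> cases h' w <;> cases b w <;> norm_num

lemma hadamardVec_symm (h b : S → Bool) : hadamardVec h b = hadamardVec b h := by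
  rw [hadamardVec_eq, hadamardVec_eq]
  refine Finset.prod_congr rfl fun w _ => ?_
  rw [Bool.and_comm]

lemma hadamardVec_update (h b : S → Bool) (x : S) :
    hadamardVec h (Function.update b x (!(b x)))
      = (if h x then (-1:ℂ) else 1) * hadamardVec h b := by
  rw [hadamardVec_eq, hadamardVec_eq,
    ← Finset.mul_prod_erase Finset.univ _ (Finset.mem_univ x),
    ← Finset.mul_prod_erase Finset.univ
      (fun w => (if h w && b w then (-1:ℂ) else 1)) (Finset.mem_univ x), ← mul_assoc]
  congr 1
  · rw [Function.update_self]
    cases h x <;> cases b x <;> norm_num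
  · refine Finset.prod_congr rfl fun w hw => ?_
    rw [Function.update_of_ne (Finset.mem_erase.mp hw).1]

lemma pauliX_hadamard (x : S) (h : S → Bool) :
    pauliX x (hadamardVec h) = (if h x then (-1:ℂ) else 1) • hadamardVec h := by
  funext b
  rw [pauliX_apply, hadamardVec_update, Pi.smul_apply, smul_eq_mul]

lemma hadamardVec_sing (x : S) (b : S → Bool) :
    hadamardVec (sing x) b = if b x then (-1:ℂ) else 1 := by
  rw [hadamardVec_eq]
  rw [Finset.prod_eq_single x]
  · simp [sing]
  · intro w _ hw
    simp [sing, hw]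
  · intro hx; exact absurd (Finset.mem_univ x) hx

lemma pauliZ_hadamard (x : S) (h : S → Bool) :
    pauliZ x (hadamardVec h) = hadamardVec (hxor (sing x) h) := by
  funext b
  rw [pauliZ_apply, ← hadamardVec_sing x b, hadamardVec_mul]

lemma hxor_cancel (x : S) (h : S → Bool) : hxor (sing x) (hxor (sing x) h) = h := by
  funext w; unfold hxor; cases sing x w <;> cases h w <;> rfl

lemma hxor_self_right (d h : S → Bool) : hxor (hxor h d) d = h := by
  funext w; unfold hxor; cases h w <;> cases d w <;> rfl

lemma update_invol (b : S → Bool) (x : S) :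
    Function.update (Function.update b x (!(b x))) x
      (!(Function.update b x (!(b x)) x)) = b := by
  funext w
  by_cases hw : w = x
  · subst hw; simp
  · simp [Function.update_of_ne hw]

lemma sum_hadamardVec (h : S → Bool) :
    ∑ b, hadamardVec h b
      = if h = (fun _ => false) then ((2:ℂ) ^ Fintype.card S) else 0 := by
  by_cases hh : h = fun _ => false
  · subst hh
    rw [if_pos rfl]
    have h1 : ∀ b : S → Bool, hadamardVec (fun _ => false) b = 1 := by
      intro b; rw [hadamardVec_eq]; simp
    simp only [h1, Finset.sum_const, Finset.card_univ, nsmul_eq_mul, mul_one]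
    rw [Fintype.card_fun, Fintype.card_bool]
    push_cast
    ring
  · rw [if_neg hh]
    obtain ⟨x, hx⟩ : ∃ x, h x = true := by
      by_contra hno
      push_neg at hno
      exact hh (funext fun w => by simpa using hno w)
    have hinv : Function.Involutive
        (fun b : S → Bool => Function.update b x (!(b x))) := fun b => update_invol b x
    have hsum := Equiv.sum_comp hinv.toPerm (hadamardVec h)
    have hneg : ∀ b : S → Bool,
        hadamardVec h (Function.update b x (!(b x))) = - hadamardVec h b := by
      intro b; rw [hadamardVec_update, hx]; ring_nf; simp
    have : ∑ b, hadamardVec h b = - ∑ b, hadamardVec h b := by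
      conv_lhs => rw [← hsum]
      simp only [Function.Involutive.coe_toPerm]
      rw [← Finset.sum_neg_distrib]
      exact Finset.sum_congr rfl fun b _ => hneg b
    have h2 : (2:ℂ) * ∑ b, hadamardVec h b = 0 := by
      rw [two_mul]
      nth_rewrite 1 [this]
      ring
    exact (mul_eq_zero.mp h2).resolve_left two_ne_zero

/-- The Fourier coefficient functional. -/
def phiL (h : S → Bool) : QState S →ₗ[ℂ] ℂ where
  toFun g := ∑ b, hadamardVec h b * g b
  map_add' g g' := by
    simp only [Pi.add_apply, mul_add]
    rw [Finset.sum_add_distrib]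
  map_smul' c g := by
    simp only [Pi.smul_apply, smul_eq_mul, RingHom.id_apply, Finset.mul_sum]
    exact Finset.sum_congr rfl fun b _ => by ring

lemma phiL_apply (h : S → Bool) (g : QState S) :
    phiL h g = ∑ b, hadamardVec h b * g b := rfl

lemma hxor_eq_zero_iff (h h' : S → Bool) :
    hxor h h' = (fun _ => false) ↔ h = h' := by
  constructor
  · intro he
    funext w
    have := congrFun he w
    revert this
    unfold hxor
    cases h w <;> cases h' w <;> simp
  · rintro rfl
    funext w
    unfold hxor
    simp

lemma phiL_hadamard (h h' : S → Bool) :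
    phiL h (hadamardVec h') = if h = h' then ((2:ℂ) ^ Fintype.card S) else 0 := by
  rw [phiL_apply]
  simp_rw [hadamardVec_mul]
  rw [sum_hadamardVec]
  simp only [hxor_eq_zero_iff]

lemma expansion (g : QState S) :
    ∑ h, phiL h g • hadamardVec h = ((2:ℂ) ^ Fintype.card S) • g := by
  funext b'
  rw [Finset.sum_apply]
  simp only [Pi.smul_apply, smul_eq_mul, phiL_apply]
  simp_rw [Finset.sum_mul]
  rw [Finset.sum_comm]
  have key : ∀ b : S → Bool,
      ∑ h : S → Bool, hadamardVec h b * g b * hadamardVec h b'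
        = g b * (if b = b' then ((2:ℂ) ^ Fintype.card S) else 0) := by
    intro b
    have hterm : ∀ h : S → Bool, hadamardVec h b * g b * hadamardVec h b'
        = g b * (hadamardVec b h * hadamardVec b' h) := fun h => by
      rw [hadamardVec_symm h b, hadamardVec_symm h b']; ring
    simp_rw [hterm]
    rw [← Finset.mul_sum]
    congr 1
    simp_rw [hadamardVec_mul]
    rw [sum_hadamardVec]
    simp only [hxor_eq_zero_iff]
  simp_rw [key]
  simp_rw [mul_ite, mul_zero]
  rw [Finset.sum_ite_eq' Finset.univ b' (fun b => g b * ((2:ℂ) ^ Fintype.card S))]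
  simp [mul_comm]

lemma two_pow_ne_zero' : ((2:ℂ) ^ Fintype.card S) ≠ 0 := pow_ne_zero _ two_ne_zero

/-- The span of Hadamard vectors of parity `c`. -/
def WpartS (S : Type*) [Fintype S] [DecidableEq S] (c : ZMod 2) : Submodule ℂ (QState S) :=
  Submodule.span ℂ {g | ∃ h : S → Bool, ((wtN h : ZMod 2)) = c ∧ g = hadamardVec h}

lemma hadamardVec_mem_WpartS {c : ZMod 2} {h : S → Bool} (hc : ((wtN h : ZMod 2)) = c) :
    hadamardVec h ∈ WpartS S c :=
  Submodule.subset_span ⟨h, hc, rfl⟩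

lemma phiL_vanish {c : ZMod 2} (h : S → Bool) (hh : ((wtN h : ZMod 2)) ≠ c) :
    WpartS S c ≤ LinearMap.ker (phiL h) := by
  rw [WpartS, Submodule.span_le]
  rintro g ⟨h', hc, rfl⟩
  simp only [SetLike.mem_coe, LinearMap.mem_ker, phiL_hadamard]
  rw [if_neg]
  rintro rfl
  exact hh hc

lemma wtN_cast_hxor (a b : S → Bool) :
    ((wtN (hxor a b) : ZMod 2)) = (wtN a : ZMod 2) + (wtN b : ZMod 2) := by
  unfold wtN
  simp_rw [Finset.card_filter]
  push_cast
  rw [← Finset.sum_add_distrib]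
  refine Finset.sum_congr rfl fun w _ => ?_
  unfold hxor
  cases a w <;> cases b w <;> simp <;> decide

lemma wtN_sing (x : S) : wtN (sing x) = 1 := by
  unfold wtN sing
  rw [show Finset.univ.filter (fun w => ((decide (w = x) : Bool) : Prop)) = {x} by
    ext w; simp]
  simp

lemma even_iff_cast (m : ℕ) : Even m ↔ ((m : ZMod 2)) = 0 := by
  rw [ZMod.natCast_eq_zero_iff]
  constructor
  · rintro ⟨k, rfl⟩; exact ⟨k, by omega⟩
  · rintro ⟨k, rfl⟩; exact ⟨k, by ring⟩

lemma odd_iff_cast (m : ℕ) : Odd m ↔ ((m : ZMod 2)) = 1 := by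
  rw [← Nat.not_even_iff_odd, even_iff_cast]
  have : ∀ x : ZMod 2, ¬x = 0 ↔ x = 1 := by decide
  exact this _

lemma zmod2_cases (x : ZMod 2) : x = 0 ∨ x = 1 := by revert x; decide

lemma zmod2_add_self (x : ZMod 2) : x + x = 0 := by revert x; decide

lemma Weven_eq (n : ℕ) : Weven n = WpartS (Fin n) 0 := by
  unfold Weven WpartS wtN
  congr 1
  ext g
  simp only [Set.mem_setOf_eq]
  constructor
  · rintro ⟨h, hc, rfl⟩; exact ⟨h, (even_iff_cast _).mp hc, rfl⟩
  · rintro ⟨h, hc, rfl⟩; exact ⟨h, (even_iff_cast _).mpr hc, rfl⟩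

lemma Wodd_eq (n : ℕ) : Wodd n = WpartS (Fin n) 1 := by
  unfold Wodd WpartS wtN
  congr 1
  ext g
  simp only [Set.mem_setOf_eq]
  constructor
  · rintro ⟨h, hc, rfl⟩; exact ⟨h, (odd_iff_cast _).mp hc, rfl⟩
  · rintro ⟨h, hc, rfl⟩; exact ⟨h, (odd_iff_cast _).mpr hc, rfl⟩

lemma linIndep_had : LinearIndependent ℂ (fun h : S → Bool => hadamardVec h) := by
  rw [Fintype.linearIndependent_iff]
  intro g hg h0
  have h1 := congrArg (phiL h0) hg
  rw [map_sum, map_zero] at h1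
  simp only [map_smul, phiL_hadamard, smul_eq_mul] at h1
  rw [Finset.sum_eq_single h0] at h1
  · rw [if_pos rfl] at h1
    exact (mul_eq_zero.mp h1).resolve_right two_pow_ne_zero'
  · intro h _ hne
    rw [if_neg (fun he => hne he.symm), mul_zero]
  · intro hmem; exact absurd (Finset.mem_univ h0) hmem

lemma WpartS_eq_range (c : ZMod 2) :
    WpartS S c = Submodule.span ℂ (Set.range
      (fun h : {h : S → Bool // ((wtN h : ZMod 2)) = c} => hadamardVec h.1)) := by
  unfold WpartS
  congr 1
  ext g
  simp only [Set.mem_setOf_eq, Set.mem_range]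
  constructor
  · rintro ⟨h, hc, rfl⟩; exact ⟨⟨h, hc⟩, rfl⟩
  · rintro ⟨⟨h, hc⟩, rfl⟩; exact ⟨h, hc, rfl⟩

lemma finrank_WpartS (c : ZMod 2) :
    Module.finrank ℂ (WpartS S c)
      = Fintype.card {h : S → Bool // ((wtN h : ZMod 2)) = c} := by
  rw [WpartS_eq_range]
  exact finrank_span_eq_card
    (linIndep_had.comp Subtype.val Subtype.val_injective)

lemma card_parity (n : ℕ) (hn : 1 ≤ n) (c : ZMod 2) :
    Fintype.card {h : Fin n → Bool // ((wtN h : ZMod 2)) = c} = 2 ^ (n - 1) := by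
  classical
  have hcards : ∀ c : ZMod 2, Fintype.card {h : Fin n → Bool // ((wtN h : ZMod 2)) = c}
      = (Finset.univ.filter (fun h : Fin n → Bool => ((wtN h : ZMod 2)) = c)).card := by
    intro c; rw [Fintype.card_subtype]
  set x0 : Fin n := ⟨0, hn⟩
  have hbij : ∀ c : ZMod 2,
      (Finset.univ.filter (fun h : Fin n → Bool => ((wtN h : ZMod 2)) = c)).card
      = (Finset.univ.filter (fun h : Fin n → Bool => ((wtN h : ZMod 2)) = 1 + c)).card := by
    intro c
    refine Finset.card_bij (fun h _ => hxor (sing x0) h) ?_ ?_ ?_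
    · intro h hh
      rw [Finset.mem_filter] at hh ⊢
      refine ⟨Finset.mem_univ _, ?_⟩
      rw [wtN_cast_hxor, wtN_sing, hh.2]
      push_cast
      ring
    · intro h1 h1m h2 h2m he
      have := congrArg (hxor (sing x0)) he
      rwa [hxor_cancel, hxor_cancel] at this
    · intro h hh
      rw [Finset.mem_filter] at hh
      refine ⟨hxor (sing x0) h, Finset.mem_filter.mpr ⟨Finset.mem_univ _, ?_⟩,
        hxor_cancel x0 h⟩
      rw [wtN_cast_hxor, wtN_sing, hh.2]
      push_cast
      rw [← add_assoc, show ((1:ZMod 2) + 1) = 0 by decide, zero_add]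
  have hcover : (Finset.univ.filter (fun h : Fin n → Bool => ((wtN h : ZMod 2)) = c)).card
      + (Finset.univ.filter (fun h : Fin n → Bool => ((wtN h : ZMod 2)) = 1 + c)).card
      = 2 ^ n := by
    have hset : (Finset.univ.filter (fun h : Fin n → Bool => ((wtN h : ZMod 2)) = 1 + c))
        = (Finset.univ.filter (fun h : Fin n → Bool => ¬ ((wtN h : ZMod 2)) = c)) := by
      refine Finset.filter_congr fun h _ => ?_
      have : ∀ x c : ZMod 2, x = 1 + c ↔ ¬x = c := by decide
      exact this _ _
    rw [hset, Finset.card_filter_add_card_filter_not, Finset.card_univ,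
      Fintype.card_fun, Fintype.card_bool, Fintype.card_fin]
  have hpow : 2 ^ n = 2 ^ (n - 1) * 2 := by
    rw [← pow_succ, Nat.sub_add_cancel hn]
  rw [hcards]
  have h1 := hbij c
  omega

end AuxHadamard


section AuxInv

variable {S : Type*} [Fintype S] [DecidableEq S]

/-- The stabilizer of a complex subspace, as a real Lie subalgebra of endomorphisms. -/
def stab (U : Submodule ℂ (QState S)) : LieSubalgebra ℝ (Module.End ℂ (QState S)) where
  carrier := {A | ∀ x ∈ U, A x ∈ U}
  add_mem' := fun {A B} hA hB x hx => by
    rw [LinearMap.add_apply]; exact U.add_mem (hA x hx) (hB x hx)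
  zero_mem' := fun x hx => by
    rw [LinearMap.zero_apply]; exact U.zero_mem
  smul_mem' := fun r A hA x hx => by
    rw [LinearMap.smul_apply]; exact U.smul_of_tower_mem r (hA x hx)
  lie_mem' := fun {A B} hA hB x hx => by
    rw [LieRing.of_associative_ring_bracket, LinearMap.sub_apply,
      Module.End.mul_apply, Module.End.mul_apply]
    exact U.sub_mem (hA _ (hB x hx)) (hB _ (hA x hx))

lemma mem_stab {U : Submodule ℂ (QState S)} {A : Module.End ℂ (QState S)} :
    A ∈ stab U ↔ ∀ x ∈ U, A x ∈ U := Iff.rfl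

lemma X_preserves (w : S) (c : ZMod 2) :
    ∀ x ∈ WpartS S c, (Complex.I • pauliX w : Module.End ℂ (QState S)) x ∈ WpartS S c := by
  intro x hx
  have hle : WpartS S c ≤ (WpartS S c).comap (Complex.I • pauliX w : Module.End ℂ (QState S)) := by
    rw [WpartS, Submodule.span_le]
    rintro g ⟨h, hc, rfl⟩
    simp only [SetLike.mem_coe, Submodule.mem_comap, LinearMap.smul_apply, pauliX_hadamard]
    exact Submodule.smul_mem _ _ (Submodule.smul_mem _ _ (hadamardVec_mem_WpartS hc))
  exact hle hx

lemma ZZ_hadamard (a b : S) (h : S → Bool) :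
    (pauliZ a * pauliZ b) (hadamardVec h)
      = hadamardVec (hxor (sing a) (hxor (sing b) h)) := by
  rw [Module.End.mul_apply, pauliZ_hadamard, pauliZ_hadamard]

lemma ZZ_parity (a b : S) (h : S → Bool) (c : ZMod 2) (hc : ((wtN h : ZMod 2)) = c) :
    ((wtN (hxor (sing a) (hxor (sing b) h)) : ZMod 2)) = c := by
  rw [wtN_cast_hxor, wtN_cast_hxor, wtN_sing, wtN_sing, hc]
  push_cast
  rw [← add_assoc, show ((1:ZMod 2) + 1) = 0 by decide, zero_add]

lemma ZZ_preserves (a b : S) (c : ZMod 2) :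
    ∀ x ∈ WpartS S c,
      (Complex.I • (pauliZ a * pauliZ b) : Module.End ℂ (QState S)) x ∈ WpartS S c := by
  intro x hx
  have hle : WpartS S c ≤ (WpartS S c).comap
      (Complex.I • (pauliZ a * pauliZ b) : Module.End ℂ (QState S)) := by
    rw [WpartS, Submodule.span_le]
    rintro g ⟨h, hc, rfl⟩
    simp only [SetLike.mem_coe, Submodule.mem_comap, LinearMap.smul_apply, ZZ_hadamard]
    exact Submodule.smul_mem _ _ (hadamardVec_mem_WpartS (ZZ_parity a b h c hc))
  exact hle hx

lemma gfree_stab (Γ : SimpleGraph S) (c : ZMod 2) : gfree Γ ≤ stab (WpartS S c) := by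
  rw [gfree]
  rw [LieSubalgebra.lieSpan_le]
  rintro A (⟨w, rfl⟩ | ⟨a, b, hab, rfl⟩)
  · exact X_preserves w c
  · exact ZZ_preserves a b c

lemma projector_mem {U : Submodule ℂ (QState S)}
    (hX : ∀ (w : S) x, x ∈ U → pauliX w x ∈ U) (h0 : S → Bool) {u : QState S}
    (hu : u ∈ U) (hph : phiL h0 u ≠ 0) : hadamardVec h0 ∈ U := by
  classical
  set F : S → Module.End ℂ (QState S) :=
    fun w => (2:ℂ)⁻¹ • (1 + (if h0 w then (-1:ℂ) else 1) • pauliX w) with hF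
  have hFact : ∀ (w : S) (h : S → Bool),
      F w (hadamardVec h) = (if h0 w = h w then (1:ℂ) else 0) • hadamardVec h := by
    intro w h
    simp only [hF, LinearMap.smul_apply, LinearMap.add_apply, Module.End.one_apply,
      pauliX_hadamard, smul_smul]
    rw [show hadamardVec h
          + ((if h0 w = true then (-1:ℂ) else 1) * (if h w = true then (-1:ℂ) else 1))
            • hadamardVec h
        = ((1:ℂ) + (if h0 w = true then (-1:ℂ) else 1) * (if h w = true then (-1:ℂ) else 1))
            • hadamardVec h from by rw [add_smul, one_smul], smul_smul]
    congr 1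
    cases hb : h0 w <;> cases hb' : h w <;> norm_num
  have hFmem : ∀ (w : S) x, x ∈ U → F w x ∈ U := by
    intro w x hx
    simp only [hF, LinearMap.smul_apply, LinearMap.add_apply, Module.End.one_apply]
    exact U.smul_mem _ (U.add_mem hx (U.smul_mem _ (hX w x hx)))
  set L : List S := Finset.univ.toList with hL
  set P : Module.End ℂ (QState S) := (L.map F).prod with hP
  have hPmem : ∀ x, x ∈ U → P x ∈ U := by
    suffices H : ∀ l : List S, ∀ x ∈ U, ((l.map F).prod) x ∈ U from fun x hx => H L x hx
    intro l
    induction l with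
    | nil => intro x hx; simpa using hx
    | cons w l ihl =>
        intro x hx
        rw [List.map_cons, List.prod_cons, Module.End.mul_apply]
        exact hFmem w _ (ihl x hx)
  have hPact : ∀ h : S → Bool,
      P (hadamardVec h)
        = ((L.map (fun w => if h0 w = h w then (1:ℂ) else 0)).prod) • hadamardVec h := by
    intro h
    suffices H : ∀ l : List S, ((l.map F).prod) (hadamardVec h)
        = ((l.map fun w => if h0 w = h w then (1:ℂ) else 0).prod) • hadamardVec h from H L
    intro l
    induction l with
    | nil => simp
    | cons w l ihl =>
        rw [List.map_cons, List.prod_cons, Module.End.mul_apply, ihl, map_smul, hFact,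
          List.map_cons, List.prod_cons, smul_smul, mul_comm]
  have hPscal : ∀ h : S → Bool,
      ((L.map (fun w => if h0 w = h w then (1:ℂ) else 0)).prod)
        = if h0 = h then (1:ℂ) else 0 := by
    intro h
    by_cases he : h0 = h
    · subst he
      rw [if_pos rfl]
      apply List.prod_eq_one
      intro a ha
      obtain ⟨w, _, rfl⟩ := List.mem_map.mp ha
      simp
    · rw [if_neg he]
      have hex : ∃ w, h0 w ≠ h w := by
        by_contra hno
        push_neg at hno
        exact he (funext hno)
      obtain ⟨w, hw⟩ := hex
      apply List.prod_eq_zero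
      exact List.mem_map.mpr ⟨w, by simp [hL, Finset.mem_toList], by simp [hw]⟩
  have hexp : ((2:ℂ) ^ Fintype.card S) • P u = phiL h0 u • hadamardVec h0 := by
    calc ((2:ℂ) ^ Fintype.card S) • P u
        = P (((2:ℂ) ^ Fintype.card S) • u) := (map_smul _ _ _).symm
      _ = P (∑ h, phiL h u • hadamardVec h) := by rw [expansion]
      _ = ∑ h, phiL h u • P (hadamardVec h) := by rw [map_sum]; exact Finset.sum_congr rfl fun h _ => by rw [map_smul]
      _ = ∑ h, phiL h u • ((if h0 = h then (1:ℂ) else 0) • hadamardVec h) := by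
            refine Finset.sum_congr rfl fun h _ => by rw [hPact, hPscal]
      _ = phiL h0 u • hadamardVec h0 := by
            rw [Finset.sum_eq_single h0]
            · rw [if_pos rfl, one_smul]
            · intro h _ hne
              rw [if_neg (fun he => hne he.symm), zero_smul, smul_zero]
            · intro hmem; exact absurd (Finset.mem_univ h0) hmem
  have hkey : hadamardVec h0 = ((phiL h0 u)⁻¹ * (2:ℂ) ^ Fintype.card S) • P u := by
    rw [mul_smul, hexp, smul_smul, inv_mul_cancel₀ hph, one_smul]
  rw [hkey]
  exact U.smul_mem _ (hPmem u hu)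

lemma WpartS_irred (Γ : SimpleGraph S) (hconn : Γ.Connected) (c : ZMod 2)
    (U : Submodule ℂ (QState S)) (hle : U ≤ WpartS S c)
    (hinv : ∀ A ∈ gfree Γ, ∀ x ∈ U, A x ∈ U) : U = ⊥ ∨ U = WpartS S c := by
  classical
  by_cases hbot : U = ⊥
  · exact Or.inl hbot
  right
  -- invariance under the individual generators
  have hX : ∀ (w : S) x, x ∈ U → pauliX w x ∈ U := by
    intro w x hx
    have h1 : (Complex.I • pauliX w : Module.End ℂ (QState S)) ∈ gfree Γ :=
      LieSubalgebra.subset_lieSpan (Or.inl ⟨w, rfl⟩)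
    have h2 := hinv _ h1 x hx
    have h3 : pauliX w x
        = (-Complex.I) • ((Complex.I • pauliX w : Module.End ℂ (QState S)) x) := by
      rw [LinearMap.smul_apply, smul_smul]
      rw [show (-Complex.I) * Complex.I = 1 by
        rw [neg_mul, Complex.I_mul_I, neg_neg], one_smul]
    rw [h3]
    exact U.smul_mem _ h2
  have hZ : ∀ a b : S, Γ.Adj a b → ∀ x ∈ U, (pauliZ a * pauliZ b) x ∈ U := by
    intro a b hab x hx
    have h1 : (Complex.I • (pauliZ a * pauliZ b) : Module.End ℂ (QState S)) ∈ gfree Γ :=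
      LieSubalgebra.subset_lieSpan (Or.inr ⟨a, b, hab, rfl⟩)
    have h2 := hinv _ h1 x hx
    have h3 : (pauliZ a * pauliZ b) x
        = (-Complex.I) • ((Complex.I • (pauliZ a * pauliZ b) : Module.End ℂ (QState S)) x) := by
      rw [LinearMap.smul_apply, smul_smul]
      rw [show (-Complex.I) * Complex.I = 1 by
        rw [neg_mul, Complex.I_mul_I, neg_neg], one_smul]
    rw [h3]
    exact U.smul_mem _ h2
  have hZh : ∀ a b : S, Γ.Adj a b → ∀ h : S → Bool, hadamardVec h ∈ U →
      hadamardVec (hxor (sing a) (hxor (sing b) h)) ∈ U := by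
    intro a b hab h hh
    have := hZ a b hab _ hh
    rwa [ZZ_hadamard] at this
  have hwalk : ∀ (x y : S) (p : Γ.Walk x y) (h : S → Bool), hadamardVec h ∈ U →
      hadamardVec (hxor (sing x) (hxor (sing y) h)) ∈ U := by
    intro x y p
    induction p with
    | nil =>
        intro h hh
        rwa [hxor_cancel]
    | @cons x' v y' hadj q ih =>
        intro h hh
        have h1 := hZh _ _ hadj h hh
        have h2 := ih _ h1
        have he : hxor (sing v) (hxor (sing y') (hxor (sing x') (hxor (sing v) h)))
            = hxor (sing x') (hxor (sing y') h) := by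
          funext w
          simp only [hxor]
          cases sing v w <;> cases sing y' w <;> cases sing x' w <;> cases h w <;> rfl
        rwa [he] at h2
  have hpair : ∀ (x y : S) (h : S → Bool), hadamardVec h ∈ U →
      hadamardVec (hxor (sing x) (hxor (sing y) h)) ∈ U := by
    intro x y h hh
    exact hwalk x y (hconn.preconnected x y).some h hh
  have hstep : ∀ (k : ℕ) (d : S → Bool), wtN d = k → ((k : ZMod 2)) = 0 →
      ∀ h : S → Bool, hadamardVec h ∈ U → hadamardVec (hxor d h) ∈ U := by
    intro k
    induction k using Nat.strong_induction_on with
    | _ k ih =>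
      intro d hd hk h hh
      by_cases h0 : k = 0
      · subst h0
        have hdall : d = fun _ => false := by
          funext w
          by_contra hw
          have hwt : w ∈ Finset.univ.filter (fun w => d w) :=
            Finset.mem_filter.mpr ⟨Finset.mem_univ _, by
              cases hdw : d w
              · exact absurd hdw hw
              · exact rfl⟩
          have := Finset.card_eq_zero.mp hd
          rw [this] at hwt
          exact absurd hwt (Finset.notMem_empty w)
        subst hdall
        have : hxor (fun _ => false) h = h := by
          funext w; unfold hxor; simp
        rwa [this]
      · have hk2 : 2 ≤ k := by
          rcases Nat.lt_or_ge k 2 with h2 | h2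
          · interval_cases k
            · exact absurd rfl h0
            · exact absurd hk (by decide)
          · exact h2
        have hcard : 1 < (Finset.univ.filter (fun w => d w)).card := by
          have : (Finset.univ.filter (fun w => d w)).card = k := hd
          omega
        obtain ⟨x, hxmem⟩ := Finset.card_pos.mp (by omega :
          0 < (Finset.univ.filter (fun w => d w)).card)
        obtain ⟨y, hymem, hyx⟩ := Finset.exists_mem_ne hcard x
        have hdx : d x = true := by
          have := (Finset.mem_filter.mp hxmem).2
          cases hdw : d x
          · rw [hdw] at this; exact absurd this (by simp)
          · rfl
        have hdy : d y = true := by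
          have := (Finset.mem_filter.mp hymem).2
          cases hdw : d y
          · rw [hdw] at this; exact absurd this (by simp)
          · rfl
        set d' : S → Bool := hxor (sing x) (hxor (sing y) d) with hd'def
        have hfil : Finset.univ.filter (fun w => d' w)
            = ((Finset.univ.filter (fun w => d w)).erase x).erase y := by
          have hxy : x ≠ y := fun he => hyx he.symm
          ext w
          simp only [Finset.mem_erase, Finset.mem_filter, Finset.mem_univ, true_and,
            hd'def, hxor, sing]
          by_cases hwx : w = x
          · subst hwx
            simp [hdx, hxy]
          · by_cases hwy : w = y
            · subst hwy
              simp [hdy, hwx]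
            · simp [hwx, hwy]
        have hd2 : wtN d' = k - 2 := by
          unfold wtN
          rw [hfil, Finset.card_erase_of_mem (Finset.mem_erase.mpr ⟨hyx, hymem⟩),
            Finset.card_erase_of_mem hxmem]
          have hcd : (Finset.univ.filter (fun w => d w)).card = k := hd
          omega
        have hk' : (((k - 2 : ℕ)) : ZMod 2) = 0 := by
          have h2 : ((k : ℕ) : ZMod 2) = ((k - 2 : ℕ) : ZMod 2) + (((2:ℕ)) : ZMod 2) := by
            rw [← Nat.cast_add]
            congr 1
            omega
          rw [hk, show (((2:ℕ)) : ZMod 2) = 0 by decide, add_zero] at h2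
          exact h2.symm
        have step1 := hpair x y h hh
        have step2 := ih (k - 2) (by omega) d' hd2 hk' _ step1
        have he : hxor d' (hxor (sing x) (hxor (sing y) h)) = hxor d h := by
          funext w
          simp only [hd'def, hxor]
          cases sing x w <;> cases sing y w <;> cases d w <;> cases h w <;> rfl
        rwa [he] at step2
  obtain ⟨u, huU, hune⟩ := (Submodule.ne_bot_iff U).mp hbot
  have hvan : ∀ h : S → Bool, ((wtN h : ZMod 2)) ≠ c → phiL h u = 0 := fun h hh =>
    LinearMap.mem_ker.mp (phiL_vanish h hh (hle huU))
  have hex : ∃ h : S → Bool, phiL h u ≠ 0 := by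
    by_contra hno
    push_neg at hno
    apply hune
    have h0 : ((2:ℂ) ^ Fintype.card S) • u = 0 := by
      rw [← expansion u]
      exact Finset.sum_eq_zero fun h _ => by rw [hno h, zero_smul]
    exact (smul_eq_zero.mp h0).resolve_left two_pow_ne_zero'
  obtain ⟨h0, hph⟩ := hex
  have hc0 : ((wtN h0 : ZMod 2)) = c := by
    by_contra hn
    exact hph (hvan h0 hn)
  have hVmem : hadamardVec h0 ∈ U := projector_mem hX h0 huU hph
  apply le_antisymm hle
  rw [WpartS, Submodule.span_le]
  rintro g ⟨h', hc', rfl⟩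
  show hadamardVec h' ∈ U
  have hdpar : ((wtN (hxor h' h0) : ZMod 2)) = 0 := by
    rw [wtN_cast_hxor, hc', hc0]
    exact zmod2_add_self c
  have hfin := hstep (wtN (hxor h' h0)) _ rfl hdpar h0 hVmem
  rwa [hxor_self_right h0 h'] at hfin

end AuxInv

/-- For a connected graph: `W = W_even ⊕ W_odd`, both summands have dimension
`2^{n-1}`, both are invariant under the free DLA, and both are irreducible. -/
theorem stmt15 (n : ℕ) (hn : 1 ≤ n) (Γ : SimpleGraph (Fin n)) (hconn : Γ.Connected) :
    (Weven n ⊓ Wodd n = ⊥ ∧ Weven n ⊔ Wodd n = ⊤) ∧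
    (Module.finrank ℂ ↥(Weven n) = 2 ^ (n - 1) ∧ Module.finrank ℂ ↥(Wodd n) = 2 ^ (n - 1)) ∧
    (∀ A ∈ gfree Γ, (∀ x ∈ Weven n, A x ∈ Weven n) ∧ (∀ x ∈ Wodd n, A x ∈ Wodd n)) ∧
    ((∀ U : Submodule ℂ (QState (Fin n)), U ≤ Weven n →
        (∀ A ∈ gfree Γ, ∀ x ∈ U, A x ∈ U) → U = ⊥ ∨ U = Weven n) ∧
     (∀ U : Submodule ℂ (QState (Fin n)), U ≤ Wodd n →
        (∀ A ∈ gfree Γ, ∀ x ∈ U, A x ∈ U) → U = ⊥ ∨ U = Wodd n)) := by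
  constructor
  · constructor
    · rw [Weven_eq, Wodd_eq, eq_bot_iff]
      rintro g hg
      obtain ⟨hg0, hg1⟩ := Submodule.mem_inf.mp hg
      rw [Submodule.mem_bot]
      have hvan : ∀ h : Fin n → Bool, phiL h g = 0 := by
        intro h
        rcases zmod2_cases ((wtN h : ZMod 2)) with h0 | h1
        · exact LinearMap.mem_ker.mp (phiL_vanish h (by rw [h0]; decide) hg1)
        · exact LinearMap.mem_ker.mp (phiL_vanish h (by rw [h1]; decide) hg0)
      have h0 : ((2:ℂ) ^ Fintype.card (Fin n)) • g = 0 := by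
        rw [← expansion g]
        exact Finset.sum_eq_zero fun h _ => by rw [hvan h, zero_smul]
      exact (smul_eq_zero.mp h0).resolve_left two_pow_ne_zero'
    · rw [Weven_eq, Wodd_eq, eq_top_iff]
      rintro g -
      have hg : g = ((2:ℂ) ^ Fintype.card (Fin n))⁻¹ • ∑ h, phiL h g • hadamardVec h := by
        rw [expansion, smul_smul, inv_mul_cancel₀ two_pow_ne_zero', one_smul]
      rw [hg]
      refine Submodule.smul_mem _ _ (Submodule.sum_mem _ fun h _ => Submodule.smul_mem _ _ ?_)
      rcases zmod2_cases ((wtN h : ZMod 2)) with h0 | h1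
      · exact Submodule.mem_sup_left (hadamardVec_mem_WpartS h0)
      · exact Submodule.mem_sup_right (hadamardVec_mem_WpartS h1)
  constructor
  · constructor
    · rw [Weven_eq, finrank_WpartS, card_parity n hn]
    · rw [Wodd_eq, finrank_WpartS, card_parity n hn]
  constructor
  · intro A hA
    refine ⟨fun x hx => ?_, fun x hx => ?_⟩
    · rw [Weven_eq] at hx ⊢
      exact (mem_stab.mp (gfree_stab Γ 0 hA)) x hx
    · rw [Wodd_eq] at hx ⊢
      exact (mem_stab.mp (gfree_stab Γ 1 hA)) x hx
  · constructor
    · intro U hle hinv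
      rcases WpartS_irred Γ hconn 0 U (by rwa [Weven_eq] at hle) hinv with h | h
      · exact Or.inl h
      · exact Or.inr (by rw [Weven_eq]; exact h)
    · intro U hle hinv
      rcases WpartS_irred Γ hconn 1 U (by rwa [Wodd_eq] at hle) hinv with h | h
      · exact Or.inl h
      · exact Or.inr (by rw [Wodd_eq]; exact h)
end
end

section
/- Let Γ be a connected finite simple graph on V = {1,…,n} and v ∈ V a vertex. Then the reduced space W_v is an irreducible representation of the free reduced DLA: every complex subspace U ⊆ W_v satisfying A(U) ⊆ U for all A ∈ g^v_{Γ,free} equals {0} or W_v. -/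
open scoped Classical

attribute [local instance 100] LieRing.ofAssociativeRing

noncomputable section

lemma pauliZ_sq {S : Type*} [Fintype S] [DecidableEq S] (w : S) :
    pauliZ w * pauliZ w = 1 := by
  apply LinearMap.ext; intro g; funext x
  show (if x w then (-1:ℂ) else 1) * ((if x w then (-1:ℂ) else 1) * g x) = g x
  split_ifs <;> ring

lemma flipUpdate_eq_iff {S : Type*} [DecidableEq S] (w : S) (x b : S → Bool) :
    Function.update x w (! x w) = b ↔ x = Function.update b w (! b w) := by
  constructor
  · rintro rfl; simp [Function.update_idem]
  · rintro rfl; simp [Function.update_idem]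

lemma pauliX_ket {S : Type*} [Fintype S] [DecidableEq S] (w : S) (b : S → Bool) :
    pauliX w (ket b) = ket (Function.update b w (! b w)) := by
  funext x
  show (if Function.update x w (! x w) = b then (1:ℂ) else 0)
      = (if x = Function.update b w (! b w) then 1 else 0)
  rw [if_congr (flipUpdate_eq_iff w x b) rfl rfl]

/-- For a connected graph, the reduced space `W_v` is an irreducible
representation of the free reduced DLA `g^v_{Γ,free}`. -/
theorem stmt16 (n : ℕ) (hn : 1 ≤ n) (Γ : SimpleGraph (Fin n)) (hconn : Γ.Connected)
    (v : Fin n) :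
    ∀ U : Submodule ℂ (QState {w : Fin n // w ≠ v}),
      (∀ A ∈ gfreeRed Γ v, ∀ x ∈ U, A x ∈ U) → U = ⊥ ∨ U = ⊤ := by
  intro U hU
  by_cases hbot : U = ⊥
  · exact Or.inl hbot
  right
  have unscale : ∀ A : Module.End ℂ (QState {w : Fin n // w ≠ v}),
      (∀ x ∈ U, (Complex.I • A) x ∈ U) → ∀ x ∈ U, A x ∈ U := by
    intro A hA x hx
    have h1 := U.smul_mem (-Complex.I) (hA x hx)
    have h2 : (-Complex.I) • ((Complex.I • A) x) = A x := by
      rw [LinearMap.smul_apply, smul_smul]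
      simp [Complex.I_mul_I]
    rwa [h2] at h1
  have hX : ∀ w : {w : Fin n // w ≠ v}, ∀ x ∈ U, pauliX w x ∈ U := by
    intro w
    apply unscale
    intro x hx
    exact hU _ (LieSubalgebra.subset_lieSpan (Or.inl (Or.inl ⟨w, rfl⟩))) x hx
  have hZsub : ∀ w : Fin n, ∀ x ∈ U, pauliZsub v w x ∈ U := by
    have key : ∀ (w u : Fin n) (p : Γ.Walk w u), u = v → ∀ x ∈ U, pauliZsub v w x ∈ U := by
      intro w u p
      induction p with
      | nil =>
        intro huv x hx
        simpa [pauliZsub, huv] using U.zero_mem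
      | @cons a c u' h q ih =>
        intro huv x hx
        by_cases ha : a = v
        · subst ha; simpa [pauliZsub] using U.zero_mem
        · by_cases hc : c = v
          · have hadj : Γ.Adj v a := by rw [← hc]; exact h.symm
            have hmem : (Complex.I • pauliZsub v a) ∈ gfreeRed Γ v :=
              LieSubalgebra.subset_lieSpan (Or.inr ⟨a, hadj, rfl⟩)
            exact unscale _ (fun y hy => hU _ hmem y hy) x hx
          · have hmem : (Complex.I • (pauliZsub v a * pauliZsub v c)) ∈ gfreeRed Γ v :=
              LieSubalgebra.subset_lieSpan (Or.inl (Or.inr ⟨a, c, h, ha, hc, rfl⟩))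
            have hZZ : ∀ y ∈ U, (pauliZsub v a * pauliZsub v c) y ∈ U :=
              unscale _ (fun y hy => hU _ hmem y hy)
            have h1 : pauliZsub v c ((pauliZsub v a * pauliZsub v c) x) ∈ U :=
              ih huv _ (hZZ x hx)
            have hsq : pauliZsub v c * pauliZsub v c = 1 := by
              simp only [pauliZsub, dif_neg hc]; exact pauliZ_sq _
            have hmul : pauliZsub v c * (pauliZsub v a * pauliZsub v c) = pauliZsub v a := by
              rw [pauliZsub_mul_comm v a c, ← mul_assoc, hsq, one_mul]
            have h2 : pauliZsub v c ((pauliZsub v a * pauliZsub v c) x) = pauliZsub v a x := by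
              rw [← Module.End.mul_apply, hmul]
            rwa [h2] at h1
    intro w
    exact key w v ((hconn.preconnected w v).some) rfl
  have hZ : ∀ w : {w : Fin n // w ≠ v}, ∀ x ∈ U, pauliZ w x ∈ U := by
    intro w x hx
    have := hZsub w.1 x hx
    rwa [pauliZsub, dif_neg w.2] at this
  obtain ⟨f, hfU, hf0⟩ := (Submodule.ne_bot_iff U).mp hbot
  obtain ⟨b0, hb0⟩ : ∃ b, f b ≠ 0 := by
    by_contra h
    push_neg at h
    exact hf0 (funext h)
  have proj : ∀ T : Finset {w : Fin n // w ≠ v},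
      (fun x : {w : Fin n // w ≠ v} → Bool =>
        if ∀ w ∈ T, x w = b0 w then f x else 0) ∈ U := by
    intro T
    induction T using Finset.induction_on with
    | empty => simpa using hfU
    | @insert a T ha ih =>
      have hZa := hZ a _ ih
      have heq : (fun x : {w : Fin n // w ≠ v} → Bool =>
            if ∀ w ∈ insert a T, x w = b0 w then f x else 0)
          = ((1:ℂ)/2) • (fun x : {w : Fin n // w ≠ v} → Bool =>
              if ∀ w ∈ T, x w = b0 w then f x else 0)
            + (((1:ℂ)/2) * (if b0 a then -1 else 1)) •
              pauliZ a (fun x : {w : Fin n // w ≠ v} → Bool =>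
                if ∀ w ∈ T, x w = b0 w then f x else 0) := by
        funext x
        have hZx : pauliZ a (fun x : {w : Fin n // w ≠ v} → Bool =>
              if ∀ w ∈ T, x w = b0 w then f x else 0) x
            = (if x a then (-1:ℂ) else 1) * (if ∀ w ∈ T, x w = b0 w then f x else 0) := rfl
        simp only [Pi.add_apply, Pi.smul_apply, smul_eq_mul, hZx]
        by_cases hxa : x a = b0 a
        · have hiff : (∀ w ∈ insert a T, x w = b0 w) ↔ (∀ w ∈ T, x w = b0 w) := by
            simp [Finset.forall_mem_insert, hxa]
          rw [if_congr hiff rfl rfl, hxa]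
          by_cases hb : b0 a = true
          · rw [if_pos hb]; split_ifs <;> ring
          · rw [if_neg hb]; split_ifs <;> ring
        · rw [if_neg (fun hall => hxa (hall a (Finset.mem_insert_self a T)))]
          have hx' : x a = !(b0 a) := by
            revert hxa; cases b0 a <;> cases x a <;> decide
          rw [hx']
          by_cases hb : b0 a = true
          · have hs1 : (if b0 a = true then (-1:ℂ) else 1) = -1 := if_pos hb
            have hs2 : (if (!b0 a) = true then (-1:ℂ) else 1) = 1 := by rw [hb]; simp
            rw [hs1, hs2]; split_ifs <;> ring
          · have hb' : b0 a = false := by revert hb; cases b0 a <;> simp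
            have hs1 : (if b0 a = true then (-1:ℂ) else 1) = 1 := by rw [hb']; simp
            have hs2 : (if (!b0 a) = true then (-1:ℂ) else 1) = -1 := by rw [hb']; simp
            rw [hs1, hs2]; split_ifs <;> ring
      rw [heq]
      exact U.add_mem (U.smul_mem _ ih) (U.smul_mem _ hZa)
  have hketb0 : ket b0 ∈ U := by
    have h1 := proj Finset.univ
    have h2 : (fun x : {w : Fin n // w ≠ v} → Bool =>
        if ∀ w ∈ Finset.univ, x w = b0 w then f x else 0) = f b0 • ket b0 := by
      funext x
      by_cases hx : x = b0
      · subst hx; simp [ket]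
      · have hno : ¬ ∀ w ∈ Finset.univ, x w = b0 w :=
          fun hall => hx (funext fun w => hall w (Finset.mem_univ w))
        rw [if_neg hno]
        simp [ket, hx]
    rw [h2] at h1
    have h3 := U.smul_mem (f b0)⁻¹ h1
    rwa [smul_smul, inv_mul_cancel₀ hb0, one_smul] at h3
  have hket : ∀ b : {w : Fin n // w ≠ v} → Bool, ket b ∈ U := by
    intro b
    have key : ∀ T : Finset {w : Fin n // w ≠ v},
        ket (fun w => if w ∈ T then b w else b0 w) ∈ U := by
      intro T
      induction T using Finset.induction_on with
      | empty => simpa using hketb0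
      | @insert a T ha ih =>
        by_cases hab : b0 a = b a
        · have heq : (fun w : {w : Fin n // w ≠ v} => if w ∈ insert a T then b w else b0 w)
              = (fun w : {w : Fin n // w ≠ v} => if w ∈ T then b w else b0 w) := by
            funext w
            by_cases hw : w = a
            · subst hw; simp [ha, hab]
            · simp [Finset.mem_insert, hw]
          rw [heq]; exact ih
        · have hXk := hX a _ ih
          rw [pauliX_ket] at hXk
          have heq : Function.update
                (fun w : {w : Fin n // w ≠ v} => if w ∈ T then b w else b0 w) a
                (!(if a ∈ T then b a else b0 a))
              = (fun w : {w : Fin n // w ≠ v} => if w ∈ insert a T then b w else b0 w) := by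
            funext w
            by_cases hw : w = a
            · subst hw
              have h1 : b0 w = !(b w) := by
                revert hab; cases b0 w <;> cases b w <;> decide
              simp [Function.update_self, if_neg ha, h1]
            · simp [Function.update_of_ne hw, Finset.mem_insert, hw]
          rwa [heq] at hXk
    have := key Finset.univ
    simpa using this
  rw [eq_top_iff]
  intro g _
  have hrep : g = ∑ b : {w : Fin n // w ≠ v} → Bool, g b • ket b := by
    funext x
    rw [Finset.sum_apply]
    simp [ket, mul_ite, mul_one, mul_zero, Finset.sum_ite_eq]
  rw [hrep]
  exact Submodule.sum_mem U (fun b _ => U.smul_mem _ (hket b))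
end
end
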